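/- Let 0 < a ≤ b, c ∈ [da, bd], and Θ = {θ ∈ R^d : a ≤ θ_i ≤ b, Σ_i θ_i ≤ c}. With ρ = (c - da)/(b - a) and k = ⌊ρ⌋, the dual box-norm satisfies ‖u‖²_{*,box} = a‖u‖₂² + (b-a)(Σ_{i=1}^k (|u|↓_i)² + (ρ-k)(|u|↓_{k+1})²) for all u ∈ R^d, where |u|↓ denotes the components of u reordered so that they are nonincreasing in absolute value. -/

import Mathlib

open Finset

set_option maxHeartbeats 1000000

noncomputable def sortedAbs (d : ℕ) (u : Fin d → ℝ) (σ : Equiv.Perm (Fin d)) : ℕ → ℝ :=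
  fun i => if h : i < d then |u (σ ⟨i, h⟩)| else 0

theorem dual_box_norm_sq {d : ℕ} (a b c : ℝ) (ha : 0 < a) (hab : a ≤ b)
    (hc1 : a * d ≤ c) (hc2 : c ≤ b * d) (u : Fin d → ℝ) (σ : Equiv.Perm (Fin d))
    (hσ : Antitone fun i => |u (σ i)|) :
    (⨆ θ : {θ : Fin d → ℝ | (∀ i, a ≤ θ i ∧ θ i ≤ b) ∧ ∑ i, θ i ≤ c},
        ∑ i, (θ : Fin d → ℝ) i * u i ^ 2) =
      a * ∑ i, u i ^ 2 +
        (b - a) * ((∑ i ∈ Finset.range ⌊(c - d * a) / (b - a)⌋₊,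
            (if h : i < d then |u (σ ⟨i, h⟩)| else 0) ^ 2) +
          ((c - d * a) / (b - a) - (⌊(c - d * a) / (b - a)⌋₊ : ℝ)) *
            (if h : ⌊(c - d * a) / (b - a)⌋₊ < d then
              |u (σ ⟨⌊(c - d * a) / (b - a)⌋₊, h⟩)| else 0) ^ 2) := by
  classical
  have hba : (0:ℝ) ≤ b - a := by linarith
  set ρ : ℝ := (c - d * a) / (b - a) with hρdef
  set k : ℕ := ⌊ρ⌋₊ with hkdef
  have hw' : ∀ i, (if h : i < d then |u (σ ⟨i, h⟩)| else 0) = sortedAbs d u σ i :=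
    fun _ => rfl
  simp only [hw']
  set w := sortedAbs d u σ with hwdef
  have hw0 : ∀ i, 0 ≤ w i := by
    intro i; simp only [hwdef, sortedAbs]; split_ifs
    · exact abs_nonneg _
    · exact le_rfl
  have hwfin : ∀ j : Fin d, w (j : ℕ) = |u (σ j)| := by
    intro j; simp only [hwdef, sortedAbs]; simp [j.isLt]
  have hwanti : ∀ i j : ℕ, i ≤ j → w j ≤ w i := by
    intro i j hij
    by_cases hj : j < d
    · have hi : i < d := lt_of_le_of_lt hij hj
      simp only [hwdef, sortedAbs]
      rw [dif_pos hi, dif_pos hj]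
      exact hσ (show (⟨i, hi⟩ : Fin d) ≤ ⟨j, hj⟩ from hij)
    · have hz : w j = 0 := by simp only [hwdef, sortedAbs]; simp [hj]
      rw [hz]; exact hw0 i
  have hρ0 : 0 ≤ ρ := div_nonneg (by linarith) hba
  have hρd : ρ ≤ d := by
    rcases eq_or_lt_of_le hab with h | h
    · rw [hρdef, ← h, sub_self, div_zero]; exact Nat.cast_nonneg d
    · rw [hρdef, div_le_iff₀ (by linarith)]
      nlinarith
  have hbaρ : (b - a) * ρ = c - d * a := by
    rcases eq_or_lt_of_le hab with h | h
    · have h2 : c = a * d := by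
        rw [← h] at hc2; linarith [mul_comm a (d:ℝ)]
      rw [← h, sub_self, zero_mul]
      linarith [mul_comm a (d:ℝ)]
    · rw [hρdef, mul_comm, div_mul_cancel₀ _ (by linarith : b - a ≠ 0)]
  have hkρ : (k : ℝ) ≤ ρ := Nat.floor_le hρ0
  have hρk1 : ρ < k + 1 := Nat.lt_floor_add_one ρ
  have hkd : k ≤ d := by
    have := Nat.floor_le_floor hρd
    simpa using this
  set T : ℕ → ℝ := fun j => if j < k then 1 else if j = k then ρ - k else 0 with hTdef
  have hT0 : ∀ j, 0 ≤ T j := by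
    intro j; simp only [hTdef]; split_ifs
    · exact zero_le_one
    · linarith
    · exact le_rfl
  have hT1 : ∀ j, T j ≤ 1 := by
    intro j; simp only [hTdef]; split_ifs
    · exact le_rfl
    · linarith
    · exact zero_le_one
  have hTone : ∀ j, j < k → T j = 1 := by
    intro j hj; simp only [hTdef]; rw [if_pos hj]
  have hTzero : ∀ j, k < j → T j = 0 := by
    intro j hj; simp only [hTdef]
    rw [if_neg (by omega), if_neg (by omega)]
  have hTk : T k = ρ - k := by
    simp [hTdef]
  have hTsum : ∑ j ∈ range d, T j = ρ := by
    rcases lt_or_ge k d with h | h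
    · have h1 : ∑ j ∈ range d, T j = ∑ j ∈ range (k+1), T j := by
        refine (sum_subset (range_subset_range.2 (by omega)) ?_).symm
        intro x _ hx
        exact hTzero x (by simpa using hx)
      have h2 : ∑ j ∈ range k, T j = ∑ _j ∈ range k, (1:ℝ) :=
        sum_congr rfl fun j hj => hTone j (mem_range.1 hj)
      rw [h1, sum_range_succ, h2, hTk]
      simp
    · have hkd' : k = d := le_antisymm hkd h
      have hρeq : ρ = d := by
        refine le_antisymm hρd ?_
        rw [hkd'] at hkρ; exact hkρ
      have h1 : ∑ j ∈ range d, T j = ∑ _j ∈ range d, (1:ℝ) :=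
        sum_congr rfl fun j hj => hTone j (by have := mem_range.1 hj; omega)
      rw [h1, hρeq]; simp
  have lemA : ∑ j ∈ range d, T j * w j ^ 2
      = (∑ i ∈ range k, w i ^ 2) + (ρ - (k:ℝ)) * w k ^ 2 := by
    rcases lt_or_ge k d with h | h
    · have h1 : ∑ j ∈ range d, T j * w j ^ 2 = ∑ j ∈ range (k+1), T j * w j ^ 2 := by
        refine (sum_subset (range_subset_range.2 (by omega)) ?_).symm
        intro x _ hx
        rw [hTzero x (by simpa using hx), zero_mul]
      rw [h1, sum_range_succ, hTk]
      congr 1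
      exact sum_congr rfl fun j hj => by rw [hTone j (mem_range.1 hj), one_mul]
    · have hwk : w k = 0 := by
        simp only [hwdef, sortedAbs]; simp [show ¬ k < d by omega]
      have h1 : ∑ j ∈ range d, T j * w j ^ 2 = ∑ j ∈ range d, w j ^ 2 :=
        sum_congr rfl fun j hj =>
          by rw [hTone j (lt_of_lt_of_le (mem_range.1 hj) h), one_mul]
      have h2 : ∑ i ∈ range k, w i ^ 2 = ∑ i ∈ range d, w i ^ 2 := by
        refine (sum_subset (range_subset_range.2 h) ?_).symm
        intro x _ hx
        have hxd : ¬ x < d := by simp only [mem_range] at hx; omega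
        simp only [hwdef, sortedAbs]; rw [dif_neg hxd]
        ring
      rw [h1, h2, hwk]; ring
  have lemB : ∀ t : ℕ → ℝ, (∀ j, 0 ≤ t j) → (∀ j, t j ≤ 1) →
      (∑ j ∈ range d, t j) ≤ ρ →
      ∑ j ∈ range d, t j * w j ^ 2 ≤ ∑ j ∈ range d, T j * w j ^ 2 := by
    intro t ht0 ht1 hts
    have key : ∑ j ∈ range d, (t j - T j) * w j ^ 2
        ≤ ∑ j ∈ range d, (t j - T j) * w k ^ 2 := by
      refine sum_le_sum ?_
      intro j _
      rcases lt_trichotomy j k with h | h | h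
      · have hTj : T j = 1 := hTone j h
        have hwkj : w k ^ 2 ≤ w j ^ 2 := by
          have h1 := hwanti j k h.le
          nlinarith [hw0 k, hw0 j]
        have hneg : t j - T j ≤ 0 := by rw [hTj]; linarith [ht1 j]
        nlinarith
      · rw [h]
      · have hTj : T j = 0 := hTzero j h
        have hwkj : w j ^ 2 ≤ w k ^ 2 := by
          have h1 := hwanti k j h.le
          nlinarith [hw0 j, hw0 k]
        have hpos : 0 ≤ t j - T j := by rw [hTj]; linarith [ht0 j]
        nlinarith
    have e1 : ∑ j ∈ range d, (t j - T j) * w k ^ 2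
        = ((∑ j ∈ range d, t j) - ρ) * w k ^ 2 := by
      rw [← sum_mul, sum_sub_distrib, hTsum]
    have e2 : ((∑ j ∈ range d, t j) - ρ) * w k ^ 2 ≤ 0 :=
      mul_nonpos_of_nonpos_of_nonneg (by linarith) (sq_nonneg _)
    have e3 : ∑ j ∈ range d, (t j - T j) * w j ^ 2
        = ∑ j ∈ range d, t j * w j ^ 2 - ∑ j ∈ range d, T j * w j ^ 2 := by
      rw [← sum_sub_distrib]
      exact sum_congr rfl fun j _ => by ring
    rw [e3, e1] at key
    linarith
  have upper : ∀ θ : Fin d → ℝ, (∀ i, a ≤ θ i ∧ θ i ≤ b) → (∑ i, θ i ≤ c) →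
      ∑ i, θ i * u i ^ 2
        ≤ a * ∑ i, u i ^ 2 + (b - a) * ∑ j ∈ range d, T j * w j ^ 2 := by
    intro θ hθ hθs
    have e0 : ∑ i, θ i * u i ^ 2
        = a * ∑ i, u i ^ 2 + ∑ i, (θ i - a) * u i ^ 2 := by
      rw [Finset.mul_sum, ← Finset.sum_add_distrib]
      exact sum_congr rfl fun i _ => by ring
    rcases eq_or_lt_of_le hab with hba' | hba'
    · have hz : ∑ i, (θ i - a) * u i ^ 2 = 0 :=
        sum_eq_zero fun i _ => by
          have : θ i = a := le_antisymm (hba' ▸ (hθ i).2) (hθ i).1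
          rw [this]; ring
      rw [e0, hz, ← hba', sub_self, zero_mul]
    · have hne : b - a ≠ 0 := by linarith
      set t : ℕ → ℝ := fun j => if h : j < d then (θ (σ ⟨j, h⟩) - a) / (b - a) else 0
        with htdef
      have ht0 : ∀ j, 0 ≤ t j := by
        intro j; simp only [htdef]; split_ifs with h
        · exact div_nonneg (by linarith [(hθ (σ ⟨j, h⟩)).1]) hba
        · exact le_rfl
      have ht1 : ∀ j, t j ≤ 1 := by
        intro j; simp only [htdef]; split_ifs with h
        · rw [div_le_one (by linarith)]
          linarith [(hθ (σ ⟨j, h⟩)).2]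
        · exact zero_le_one
      have hts : ∑ j ∈ range d, t j ≤ ρ := by
        have e : ∑ j ∈ range d, t j = ((∑ i, θ i) - d * a) / (b - a) := by
          rw [← Fin.sum_univ_eq_sum_range t d]
          have e1 : ∀ j : Fin d, t (j : ℕ) = (θ (σ j) - a) / (b - a) := by
            intro j; simp only [htdef]; rw [dif_pos j.isLt]
          calc ∑ j : Fin d, t (j : ℕ)
              = ∑ j : Fin d, (θ (σ j) - a) / (b - a) :=
                sum_congr rfl fun j _ => e1 j
            _ = (∑ j : Fin d, (θ (σ j) - a)) / (b - a) := by rw [sum_div]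
            _ = ((∑ i, θ i) - d * a) / (b - a) := by
                rw [sum_sub_distrib, Equiv.sum_comp σ θ]
                simp [mul_comm]
        rw [e, hρdef]
        gcongr <;> linarith
      have e1 : ∑ i, (θ i - a) * u i ^ 2
          = (b - a) * ∑ j ∈ range d, t j * w j ^ 2 := by
        rw [Finset.mul_sum,
          ← Fin.sum_univ_eq_sum_range (fun j => (b - a) * (t j * w j ^ 2)) d,
          ← Equiv.sum_comp σ (fun i => (θ i - a) * u i ^ 2)]
        refine sum_congr rfl fun j _ => ?_
        have h1 : t (j : ℕ) = (θ (σ j) - a) / (b - a) := by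
          simp only [htdef]; rw [dif_pos j.isLt]
        simp only [h1, hwfin j, sq_abs]
        field_simp
      have hB := lemB t ht0 ht1 hts
      have h2 : (b - a) * ∑ j ∈ range d, t j * w j ^ 2
          ≤ (b - a) * ∑ j ∈ range d, T j * w j ^ 2 :=
        mul_le_mul_of_nonneg_left hB hba
      rw [e0, e1]
      linarith
  rw [lemA.symm]
  set θs : Fin d → ℝ := fun i => a + (b - a) * T ((σ⁻¹ i : Fin d) : ℕ) with hθsdef
  have hθsmem1 : ∀ i, a ≤ θs i ∧ θs i ≤ b := by
    intro i
    constructor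
    · simp only [hθsdef]
      nlinarith [hT0 ((σ⁻¹ i : Fin d) : ℕ)]
    · simp only [hθsdef]
      nlinarith [hT1 ((σ⁻¹ i : Fin d) : ℕ), hT0 ((σ⁻¹ i : Fin d) : ℕ)]
  have hθsmem2 : ∑ i, θs i ≤ c := by
    have e : ∑ i, θs i = d * a + (b - a) * ρ := by
      simp only [hθsdef]
      rw [Finset.sum_add_distrib, Finset.sum_const, ← Finset.mul_sum]
      have e1 : ∑ i, T ((σ⁻¹ i : Fin d) : ℕ) = ρ := by
        rw [Equiv.sum_comp σ⁻¹ (fun j : Fin d => T (j : ℕ)),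
          Fin.sum_univ_eq_sum_range T d, hTsum]
      rw [e1]
      simp [Fintype.card_fin, mul_comm]
    rw [e, hbaρ]
    linarith
  have hθsval : ∑ i, θs i * u i ^ 2
      = a * ∑ i, u i ^ 2 + (b - a) * ∑ j ∈ range d, T j * w j ^ 2 := by
    simp only [hθsdef]
    have e : ∀ i, (a + (b - a) * T ((σ⁻¹ i : Fin d) : ℕ)) * u i ^ 2
        = a * u i ^ 2 + (b - a) * (T ((σ⁻¹ i : Fin d) : ℕ) * u i ^ 2) := fun i => by ring
    simp only [e]
    rw [sum_add_distrib, ← Finset.mul_sum, ← Finset.mul_sum]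
    congr 1
    congr 1
    rw [← Fin.sum_univ_eq_sum_range (fun j => T j * w j ^ 2) d,
      ← Equiv.sum_comp σ (fun i => T ((σ⁻¹ i : Fin d) : ℕ) * u i ^ 2)]
    refine sum_congr rfl fun j _ => ?_
    simp only [Equiv.Perm.inv_def, Equiv.symm_apply_apply, hwfin j, sq_abs]
  haveI hne : Nonempty {θ : Fin d → ℝ | (∀ i, a ≤ θ i ∧ θ i ≤ b) ∧ ∑ i, θ i ≤ c} := by
    refine ⟨⟨fun _ => a, ⟨fun i => ⟨le_rfl, hab⟩, ?_⟩⟩⟩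
    simp only [Finset.sum_const, Finset.card_univ, Fintype.card_fin, nsmul_eq_mul]
    linarith [mul_comm a (d:ℝ)]
  refine le_antisymm (ciSup_le ?_) ?_
  · rintro ⟨θ, h1, h2⟩
    exact upper θ h1 h2
  · have hmem : θs ∈ {θ : Fin d → ℝ | (∀ i, a ≤ θ i ∧ θ i ≤ b) ∧ ∑ i, θ i ≤ c} :=
      ⟨hθsmem1, hθsmem2⟩
    refine le_ciSup_of_le ?_ ⟨θs, hmem⟩ ?_
    · refine ⟨a * ∑ i, u i ^ 2 + (b - a) * ∑ j ∈ range d, T j * w j ^ 2, ?_⟩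
      rintro x ⟨⟨θ, h1, h2⟩, rfl⟩
      exact upper θ h1 h2
    · exact le_of_eq hθsval.symm
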